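/- Write a := A_{1,2} and b := A_{2,3} in P_3. For all nonzero integers n and m, the element [a^n, b^m] · [a, b]^{-nm} lies in Bd_3; consequently the coset of [a, b] generates the quotient group Z_3 / Bd_3. -/

import Mathlib

namespace Braids

/-- The braid relations on the generators `σ_1, …, σ_{n-1}` (indexed by `Fin (n-1)`). -/
def braidRels (n : ℕ) : Set (FreeGroup (Fin (n - 1))) :=
  {r | (∃ i j : Fin (n - 1), (i : ℕ) + 1 = (j : ℕ) ∧
          r = .of i * .of j * .of i * (.of j * .of i * .of j)⁻¹) ∨
       (∃ i j : Fin (n - 1), (i : ℕ) + 2 ≤ (j : ℕ) ∧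
          r = .of i * .of j * (.of j * .of i)⁻¹)}

/-- The Artin braid group on `n` strands, presented by generators and the braid relations. -/
abbrev BraidGroup (n : ℕ) := PresentedGroup (braidRels n)

/-- The Artin generator `σ_{i+1}` (0-indexed). -/
def σ {n : ℕ} (i : Fin (n - 1)) : BraidGroup n := PresentedGroup.of i

/-- The transposition `(i, i+1)` associated to the generator `σ`. -/
def swapGen (n : ℕ) (i : Fin (n - 1)) : Equiv.Perm (Fin n) :=
  Equiv.swap ⟨i.1, by have := i.2; omega⟩ ⟨i.1 + 1, by have := i.2; omega⟩

private lemma swap_braid {α : Type*} [DecidableEq α] {a b c : α}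
    (hab : a ≠ b) (hac : a ≠ c) (hbc : b ≠ c) :
    Equiv.swap a b * Equiv.swap b c * Equiv.swap a b =
      Equiv.swap b c * Equiv.swap a b * Equiv.swap b c := by
  have h1 := Equiv.swap_apply_apply (Equiv.swap a b) b c
  rw [Equiv.swap_apply_right, Equiv.swap_apply_of_ne_of_ne hac.symm hbc.symm,
    Equiv.swap_inv] at h1
  have h2 := Equiv.swap_apply_apply (Equiv.swap b c) a b
  rw [Equiv.swap_apply_of_ne_of_ne hab hac, Equiv.swap_apply_left, Equiv.swap_inv] at h2
  rw [← h1, ← h2]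

private lemma swap_commute {α : Type*} [DecidableEq α] {a b c d : α}
    (hca : c ≠ a) (hcb : c ≠ b) (hda : d ≠ a) (hdb : d ≠ b) :
    Equiv.swap a b * Equiv.swap c d = Equiv.swap c d * Equiv.swap a b := by
  have h := Equiv.swap_apply_apply (Equiv.swap a b) c d
  rw [Equiv.swap_apply_of_ne_of_ne hca hcb, Equiv.swap_apply_of_ne_of_ne hda hdb,
    Equiv.swap_inv] at h
  nth_rewrite 1 [h]
  rw [← mul_assoc, ← mul_assoc, Equiv.swap_mul_self, one_mul]

theorem braidRels_hold (n : ℕ) :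
    ∀ r ∈ braidRels n, FreeGroup.lift (swapGen n) r = 1 := by
  rintro r (⟨i, j, hij, rfl⟩ | ⟨i, j, hij, rfl⟩) <;>
    simp only [map_mul, map_inv, FreeGroup.lift_apply_of, mul_inv_eq_one]
  · have hj : swapGen n j =
        Equiv.swap (⟨i.1 + 1, by have := i.2; have := j.2; omega⟩ : Fin n)
          ⟨i.1 + 2, by have := j.2; omega⟩ := by
      unfold swapGen
      congr 1 <;> simp only [Fin.mk.injEq] <;> omega
    rw [hj]
    exact swap_braid (by simp only [ne_eq, Fin.mk.injEq]; omega)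
      (by simp only [ne_eq, Fin.mk.injEq]; omega) (by simp only [ne_eq, Fin.mk.injEq]; omega)
  · exact swap_commute (by simp only [ne_eq, Fin.mk.injEq]; omega)
      (by simp only [ne_eq, Fin.mk.injEq]; omega) (by simp only [ne_eq, Fin.mk.injEq]; omega)
      (by simp only [ne_eq, Fin.mk.injEq]; omega)

/-- The canonical projection from the braid group to the symmetric group,
sending `σ_i` to the transposition `(i, i+1)`. -/
def toPerm (n : ℕ) : BraidGroup n →* Equiv.Perm (Fin n) :=
  PresentedGroup.toGroup (braidRels_hold n)

/-- The pure braid group on `n` strands, as a subgroup of the braid group. -/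
def PureBraid (n : ℕ) : Subgroup (BraidGroup n) := (toPerm n).ker

/-- The pure braid group `P n` as a group. -/
abbrev P (n : ℕ) := ↥(PureBraid n)

/-- The generator `σ_k` (1-indexed, junk value `1` for out-of-range `k`). -/
def sig (n k : ℕ) : BraidGroup n :=
  if h : 1 ≤ k ∧ k ≤ n - 1 then σ ⟨k - 1, by omega⟩ else 1

/-- The conjugating word `σ_{j-1} σ_{j-2} ⋯ σ_{i+1}`. -/
def chain (n i j : ℕ) : BraidGroup n :=
  (((List.range (j - i - 1)).map (fun t => sig n (j - 1 - t))).prod)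

/-- The pure braid generator `A_{i,j} = σ_{j-1} ⋯ σ_{i+1} σ_i² σ_{i+1}⁻¹ ⋯ σ_{j-1}⁻¹`
(for `1 ≤ i < j ≤ n`; junk values otherwise), as an element of the braid group. -/
def Agen (n i j : ℕ) : BraidGroup n := chain n i j * (sig n i) ^ 2 * (chain n i j)⁻¹

theorem toPerm_sig_sq (n k : ℕ) : (toPerm n (sig n k)) ^ 2 = 1 := by
  unfold sig
  split
  · show (toPerm n (PresentedGroup.of _)) ^ 2 = 1
    rw [toPerm, PresentedGroup.toGroup.of]
    simp [swapGen, sq, Equiv.swap_mul_self]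
  · simp

theorem Agen_mem (n i j : ℕ) : Agen n i j ∈ PureBraid n := by
  have : toPerm n (Agen n i j) = 1 := by
    unfold Agen
    rw [map_mul, map_mul, map_inv, map_pow, toPerm_sig_sq, mul_one, mul_inv_cancel]
  exact this

/-- `A_{i,j}` extended symmetrically: `A_{j,i} := A_{i,j}` and `A_{i,i} := 1`. -/
def ASym (n i j : ℕ) : BraidGroup n := if i = j then 1 else Agen n (min i j) (max i j)

theorem ASym_mem (n i j : ℕ) : ASym n i j ∈ PureBraid n := by
  unfold ASym
  split
  · exact one_mem _
  · exact Agen_mem n _ _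

/-- `A_{0,j} := (A_{1,j} A_{2,j} ⋯ A_{n,j})⁻¹`, as an element of the braid group. -/
def A0gen (n j : ℕ) : BraidGroup n :=
  (((List.range n).map (fun t => ASym n (t + 1) j)).prod)⁻¹

theorem A0gen_mem (n j : ℕ) : A0gen n j ∈ PureBraid n := by
  refine inv_mem (list_prod_mem ?_)
  intro x hx
  simp only [List.mem_map] at hx
  obtain ⟨t, -, rfl⟩ := hx
  exact ASym_mem n _ _

/-- The pure braid generator `A_{i,j}` (with the conventions `A_{j,i} = A_{i,j}`, `A_{i,i} = 1`),
as an element of the pure braid group. -/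
def A (n i j : ℕ) : P n := ⟨ASym n i j, ASym_mem n i j⟩

/-- The element `A_{0,j} = (A_{1,j} A_{2,j} ⋯ A_{n,j})⁻¹` of the pure braid group. -/
def A₀ (n j : ℕ) : P n := ⟨A0gen n j, A0gen_mem n j⟩

/-- The full twist `z_n = A_{1,2} (A_{1,3} A_{2,3}) ⋯ (A_{1,n} A_{2,n} ⋯ A_{n-1,n})`. -/
def fullTwist (n : ℕ) : P n :=
  (((List.range (n - 1)).map
    (fun jt => ((List.range (jt + 1)).map (fun it => A n (it + 1) (jt + 2))).prod)).prod)

/-- The reindexing map associated with removing the `k`-th strand. -/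
def phi (k m : ℕ) : ℕ := if m < k then m else m - 1

/-- `d` is the `k`-th strand-removal homomorphism `P n → P (n-1)`: it is determined by
`d (A_{i,j}) = 1` if `k ∈ {i, j}`, and `d (A_{i,j}) = A_{φ(i),φ(j)}` otherwise. -/
def IsStrandRemoval (n k : ℕ) (d : P n →* P (n - 1)) : Prop :=
  ∀ i j : ℕ, 1 ≤ i → i < j → j ≤ n →
    d (A n i j) = if k = i ∨ k = j then 1 else A (n - 1) (phi k i) (phi k j)

/-- The Brunnian subgroup `Brun_n = ∩_{k=1}^n Ker (d_k)`, for a family `d` of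
strand-removal homomorphisms. -/
def Brunnian (n : ℕ) (d : ℕ → (P n →* P (n - 1))) : Subgroup (P n) :=
  ⨅ k ∈ Finset.Icc 1 n, (d k).ker

/-- `θ` is the automorphism `θ_n` of `P n`: it fixes `A_{i,j}` for `2 ≤ i < j ≤ n` and sends
`A_{1,j}` to `A_{1,j}⁻¹ A_{0,j} A_{1,j}`. -/
def IsTheta (n : ℕ) (θ : MulAut (P n)) : Prop :=
  (∀ i j : ℕ, 2 ≤ i → i < j → j ≤ n → θ (A n i j) = A n i j) ∧
  (∀ j : ℕ, 1 < j → j ≤ n → θ (A n 1 j) = (A n 1 j)⁻¹ * A₀ n j * A n 1 j)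

/-- The homomorphism `∂_n := d_1 ∘ θ_n : P n → P (n-1)`. -/
def del (n : ℕ) (d : ℕ → (P n →* P (n - 1))) (θ : MulAut (P n)) : P n →* P (n - 1) :=
  (d 1).comp θ.toMonoidHom

/-- `Z_n := Brun_n ∩ Ker ∂_n`. -/
def Zgrp (n : ℕ) (d : ℕ → (P n →* P (n - 1))) (θ : MulAut (P n)) : Subgroup (P n) :=
  Brunnian n d ⊓ (del n d θ).ker

/-- `Bd_n := ∂_{n+1}(Brun_{n+1})`, built from strand-removal data on `n+1` strands. -/
def Bd (n : ℕ) (D : ℕ → (P (n + 1) →* P n)) (Θ : MulAut (P (n + 1))) : Subgroup (P n) :=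
  Subgroup.map (del (n + 1) D Θ) (Brunnian (n + 1) D)

/-- `w` is the automorphism `w_n` of `P n`: it fixes `A_{i,j}` for `1 ≤ i < j ≤ n-1` and sends
`A_{i,n}` to `A_{i,n} A_{0,i} A_{i,n}⁻¹` for `1 ≤ i ≤ n-1`. -/
def IsW (n : ℕ) (w : MulAut (P n)) : Prop :=
  (∀ i j : ℕ, 1 ≤ i → i < j → j ≤ n - 1 → w (A n i j) = A n i j) ∧
  (∀ i : ℕ, 1 ≤ i → i ≤ n - 1 → w (A n i n) = A n i n * A₀ n i * (A n i n)⁻¹)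



set_option linter.dupNamespace false

section B3

theorem rel_eq_one {n : ℕ} {r : FreeGroup (Fin (n-1))} (h : r ∈ braidRels n) :
    PresentedGroup.mk (braidRels n) r = 1 :=
  (QuotientGroup.eq_one_iff r).2 (Subgroup.subset_normalClosure h)

def s1 : BraidGroup 3 := σ ⟨0, by norm_num⟩
def s2 : BraidGroup 3 := σ ⟨1, by norm_num⟩

theorem sig31 : sig 3 1 = s1 := by simp [sig, s1]
theorem sig32 : sig 3 2 = s2 := by simp [sig, s2]

theorem brel : s1 * s2 * s1 = s2 * s1 * s2 := by
  have h := rel_eq_one (n := 3)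
    (r := .of ⟨0, by norm_num⟩ * .of ⟨1, by norm_num⟩ * .of ⟨0, by norm_num⟩ *
      (.of ⟨1, by norm_num⟩ * .of ⟨0, by norm_num⟩ * .of ⟨1, by norm_num⟩)⁻¹)
    (Or.inl ⟨⟨0, by norm_num⟩, ⟨1, by norm_num⟩, by norm_num, rfl⟩)
  rw [map_mul, map_inv, mul_inv_eq_one] at h
  simpa [map_mul, s1, s2, σ, PresentedGroup.of] using h

theorem w_s1 : (s1 * s2 * s1) * s1 = s2 * (s1 * s2 * s1) := by
  conv_lhs => rw [brel]
  group

theorem w_s2 : (s1 * s2 * s1) * s2 = s1 * (s1 * s2 * s1) := by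
  conv_rhs => rw [brel]
  group

end B3

theorem ibrel : s1⁻¹ * s2⁻¹ * s1⁻¹ = s2⁻¹ * s1⁻¹ * s2⁻¹ := by
  calc s1⁻¹ * s2⁻¹ * s1⁻¹ = (s1 * s2 * s1)⁻¹ := by group
    _ = (s2 * s1 * s2)⁻¹ := by rw [brel]
    _ = s2⁻¹ * s1⁻¹ * s2⁻¹ := by group

theorem cA : s2 * s1 * s2⁻¹ = s1⁻¹ * s2 * s1 := by
  calc s2 * s1 * s2⁻¹ = s1⁻¹ * (s1 * s2 * s1) * s2⁻¹ := by group
    _ = s1⁻¹ * (s2 * s1 * s2) * s2⁻¹ := by rw [brel]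
    _ = s1⁻¹ * s2 * s1 := by group

theorem cB : s2⁻¹ * s1 * s2 = s1 * s2 * s1⁻¹ := by
  calc s2⁻¹ * s1 * s2 = s2⁻¹ * (s1 * s2 * s1) * s1⁻¹ := by group
    _ = s2⁻¹ * (s2 * s1 * s2) * s1⁻¹ := by rw [brel]
    _ = s1 * s2 * s1⁻¹ := by group

theorem cBi : s2⁻¹ * s1⁻¹ * s2 = s1 * s2⁻¹ * s1⁻¹ := by
  calc s2⁻¹ * s1⁻¹ * s2 = (s2⁻¹ * s1 * s2)⁻¹ := by group
    _ = (s1 * s2 * s1⁻¹)⁻¹ := by rw [cB]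
    _ = s1 * s2⁻¹ * s1⁻¹ := by group

theorem cH : s1⁻¹ * s2⁻¹ * s1 = s2 * s1⁻¹ * s2⁻¹ := by
  calc s1⁻¹ * s2⁻¹ * s1 = (s1⁻¹ * s2 * s1)⁻¹ := by group
    _ = (s2 * s1 * s2⁻¹)⁻¹ := by rw [← cA]
    _ = s2 * s1⁻¹ * s2⁻¹ := by group

-- the three standard pure braid generators, as elements of the braid group
def ga : BraidGroup 3 := s1 * s1
def gp : BraidGroup 3 := s2 * (s1 * s1) * s2⁻¹
def gb : BraidGroup 3 := s2 * s2

/-- subgroup generated by the pure braid generators -/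
def HH : Subgroup (BraidGroup 3) := Subgroup.closure {ga, gp, gb}

theorem ga_mem : ga ∈ HH := Subgroup.subset_closure (by simp)
theorem gp_mem : gp ∈ HH := Subgroup.subset_closure (by simp)
theorem gb_mem : gb ∈ HH := Subgroup.subset_closure (by simp)

def repv : Fin 6 → BraidGroup 3 := ![1, s1, s2, s1 * s2, s2 * s1, s1 * s2 * s1]

-- nontrivial coset identities
theorem L08 : s1 * s2⁻¹ = ga * gp⁻¹ * ga⁻¹ * (s1 * s2) := by
  show s1 * s2⁻¹ = (s1*s1) * (s2 * (s1*s1) * s2⁻¹)⁻¹ * (s1*s1)⁻¹ * (s1 * s2)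
  calc s1 * s2⁻¹ = s1 * s1 * (s1⁻¹ * s2⁻¹ * s1) * s1⁻¹ := by group
    _ = s1 * s1 * (s2 * s1⁻¹ * s2⁻¹) * s1⁻¹ := by rw [cH]
    _ = s1 * s1 * s2 * s1⁻¹ * ((s1⁻¹ * s2⁻¹ * s1⁻¹) * s2) := by rw [ibrel]; group
    _ = (s1*s1) * (s2 * (s1*s1) * s2⁻¹)⁻¹ * (s1*s1)⁻¹ * (s1 * s2) := by group

theorem L3s2 : (s1 * s2) * s2 = ga * gp * ga⁻¹ * s1 := by
  show (s1 * s2) * s2 = (s1*s1) * (s2 * (s1*s1) * s2⁻¹) * (s1*s1)⁻¹ * s1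
  calc (s1 * s2) * s2 = s1 * (s2 * s1 * s2) * (s2⁻¹ * s1⁻¹ * s2) := by group
    _ = s1 * (s1 * s2 * s1) * (s2⁻¹ * s1⁻¹ * s2) := by rw [← brel]
    _ = s1 * (s1 * s2 * s1) * (s1 * s2⁻¹ * s1⁻¹) := by rw [cBi]
    _ = (s1*s1) * (s2 * (s1*s1) * s2⁻¹) * (s1*s1)⁻¹ * s1 := by group

theorem L3s1i : (s1 * s2) * s1⁻¹ = gb⁻¹ * (s1 * s2 * s1) := by
  show (s1 * s2) * s1⁻¹ = (s2*s2)⁻¹ * (s1 * s2 * s1)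
  calc (s1 * s2) * s1⁻¹ = s2⁻¹ * s1 * s2 := by rw [cB]
    _ = (s2*s2)⁻¹ * (s2 * s1 * s2) := by group
    _ = (s2*s2)⁻¹ * (s1 * s2 * s1) := by rw [← brel]

theorem L4s2 : (s2 * s1) * s2 = s1 * s2 * s1 := by rw [← brel]

theorem L4s2i : (s2 * s1) * s2⁻¹ = ga⁻¹ * (s1 * s2 * s1) := by
  show (s2 * s1) * s2⁻¹ = (s1*s1)⁻¹ * (s1 * s2 * s1)
  calc (s2 * s1) * s2⁻¹ = s2 * s1 * s2⁻¹ := by group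
    _ = s1⁻¹ * s2 * s1 := cA
    _ = (s1*s1)⁻¹ * (s1 * s2 * s1) := by group

theorem L5s1 : (s1 * s2 * s1) * s1 = gb * (s1 * s2) := by
  show (s1 * s2 * s1) * s1 = (s2*s2) * (s1 * s2)
  calc (s1 * s2 * s1) * s1 = s2 * (s1 * s2 * s1) := w_s1
    _ = s2 * (s2 * s1 * s2) := by rw [brel]
    _ = (s2*s2) * (s1 * s2) := by group

theorem L5s2 : (s1 * s2 * s1) * s2 = ga * (s2 * s1) := by
  show (s1 * s2 * s1) * s2 = (s1*s1) * (s2 * s1)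
  calc (s1 * s2 * s1) * s2 = s1 * (s1 * s2 * s1) := w_s2
    _ = (s1*s1) * (s2 * s1) := by group

theorem L5s2i : (s1 * s2 * s1) * s2⁻¹ = s2 * s1 := by rw [brel]; group

set_option linter.unusedTactic false

def Rset : Set (BraidGroup 3) := {1, s1, s2, s1 * s2, s2 * s1, s1 * s2 * s1}

theorem m0 : (1 : BraidGroup 3) ∈ Rset := Or.inl rfl
theorem m1 : s1 ∈ Rset := Or.inr (Or.inl rfl)
theorem m2 : s2 ∈ Rset := Or.inr (Or.inr (Or.inl rfl))
theorem m3 : s1 * s2 ∈ Rset := Or.inr (Or.inr (Or.inr (Or.inl rfl)))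
theorem m4 : s2 * s1 ∈ Rset := Or.inr (Or.inr (Or.inr (Or.inr (Or.inl rfl))))
theorem m5 : s1 * s2 * s1 ∈ Rset := Or.inr (Or.inr (Or.inr (Or.inr (Or.inr rfl))))

theorem exists_decomp (g : BraidGroup 3) : ∃ h ∈ HH, ∃ r ∈ Rset, g = h * r := by
  have hg : g ∈ Subgroup.closure (Set.range (PresentedGroup.of (rels := braidRels 3))) := by
    rw [PresentedGroup.closure_range_of]; trivial
  induction hg using Subgroup.closure_induction_right with
  | one => exact ⟨1, one_mem _, 1, m0, by group⟩
  | mul_right x hx y hy ih =>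
    obtain ⟨h, hh, r, hr, rfl⟩ := ih
    obtain ⟨j, rfl⟩ := hy
    have hj : PresentedGroup.of (rels := braidRels 3) j = s1 ∨
        PresentedGroup.of (rels := braidRels 3) j = s2 := by
      fin_cases j
      · exact Or.inl rfl
      · exact Or.inr rfl
    rcases hj with rfl1 | rfl1 <;> rw [rfl1] <;>
      rcases hr with rfl | rfl | rfl | rfl | rfl | rfl
    · exact ⟨h, hh, s1, m1, by group⟩
    · exact ⟨h * ga, mul_mem hh ga_mem, 1, m0, by simp only [ga]; group⟩
    · exact ⟨h, hh, s2 * s1, m4, by group⟩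
    · exact ⟨h, hh, s1 * s2 * s1, m5, by group⟩
    · exact ⟨h * gp, mul_mem hh gp_mem, s2, m2, by simp only [gp]; group⟩
    · exact ⟨h * gb, mul_mem hh gb_mem, s1 * s2, m3, by rw [mul_assoc, L5s1]; group⟩
    · exact ⟨h, hh, s2, m2, by group⟩
    · exact ⟨h, hh, s1 * s2, m3, by group⟩
    · exact ⟨h * gb, mul_mem hh gb_mem, 1, m0, by simp only [gb]; group⟩
    · exact ⟨h * (ga * gp * ga⁻¹), mul_mem hh (mul_mem (mul_mem ga_mem gp_mem) (inv_mem ga_mem)),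
        s1, m1, by rw [mul_assoc, L3s2]; group⟩
    · exact ⟨h, hh, s1 * s2 * s1, m5, by rw [mul_assoc, L4s2]⟩
    · exact ⟨h * ga, mul_mem hh ga_mem, s2 * s1, m4, by rw [mul_assoc, L5s2]; group⟩
  | mul_inv_cancel x hx y hy ih =>
    obtain ⟨h, hh, r, hr, rfl⟩ := ih
    obtain ⟨j, rfl⟩ := hy
    have hj : PresentedGroup.of (rels := braidRels 3) j = s1 ∨
        PresentedGroup.of (rels := braidRels 3) j = s2 := by
      fin_cases j
      · exact Or.inl rfl
      · exact Or.inr rfl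
    rcases hj with rfl1 | rfl1 <;> rw [rfl1] <;>
      rcases hr with rfl | rfl | rfl | rfl | rfl | rfl
    · exact ⟨h * ga⁻¹, mul_mem hh (inv_mem ga_mem), s1, m1, by simp only [ga]; group⟩
    · exact ⟨h, hh, 1, m0, by group⟩
    · exact ⟨h * gp⁻¹, mul_mem hh (inv_mem gp_mem), s2 * s1, m4, by simp only [gp]; group⟩
    · exact ⟨h * gb⁻¹, mul_mem hh (inv_mem gb_mem), s1 * s2 * s1, m5,
        by rw [mul_assoc, L3s1i]; group⟩
    · exact ⟨h, hh, s2, m2, by group⟩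
    · exact ⟨h, hh, s1 * s2, m3, by group⟩
    · exact ⟨h * gb⁻¹, mul_mem hh (inv_mem gb_mem), s2, m2, by simp only [gb]; group⟩
    · exact ⟨h * (ga * gp⁻¹ * ga⁻¹), mul_mem hh (mul_mem (mul_mem ga_mem (inv_mem gp_mem))
        (inv_mem ga_mem)), s1 * s2, m3, by rw [mul_assoc, L08]; group⟩
    · exact ⟨h, hh, 1, m0, by group⟩
    · exact ⟨h, hh, s1, m1, by group⟩
    · exact ⟨h * ga⁻¹, mul_mem hh (inv_mem ga_mem), s1 * s2 * s1, m5,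
        by rw [mul_assoc, L4s2i]; group⟩
    · exact ⟨h, hh, s2 * s1, m4, by rw [mul_assoc, L5s2i]⟩

theorem tp_s1 : toPerm 3 s1 = swapGen 3 ⟨0, by norm_num⟩ := PresentedGroup.toGroup.of _
theorem tp_s2 : toPerm 3 s2 = swapGen 3 ⟨1, by norm_num⟩ := PresentedGroup.toGroup.of _

theorem HH_le_pure : HH ≤ PureBraid 3 := by
  rw [HH, Subgroup.closure_le]
  rintro x (rfl | rfl | rfl)
  · show toPerm 3 (s1 * s1) = 1
    rw [map_mul, tp_s1]; decide
  · show toPerm 3 (s2 * (s1 * s1) * s2⁻¹) = 1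
    rw [map_mul, map_mul, map_inv, map_mul, tp_s1, tp_s2]; decide
  · show toPerm 3 (s2 * s2) = 1
    rw [map_mul, tp_s2]; decide

theorem pure_decomp {g : BraidGroup 3} (hg : g ∈ PureBraid 3) : g ∈ HH := by
  obtain ⟨h, hh, r, hr, rfl⟩ := exists_decomp g
  have h1 : toPerm 3 h = 1 := HH_le_pure hh
  have h2 : toPerm 3 (h * r) = 1 := hg
  rw [map_mul, h1, one_mul] at h2
  rcases hr with rfl | rfl | rfl | rfl | rfl | rfl
  · simpa using hh
  · rw [tp_s1] at h2; exact absurd h2 (by decide)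
  · rw [tp_s2] at h2; exact absurd h2 (by decide)
  · rw [map_mul, tp_s1, tp_s2] at h2; exact absurd h2 (by decide)
  · rw [map_mul, tp_s1, tp_s2] at h2; exact absurd h2 (by decide)
  · rw [map_mul, map_mul, tp_s1, tp_s2] at h2; exact absurd h2 (by decide)

-- coercion values of the three standard generators of P_3
theorem Acoe12 : (A 3 1 2).val = ga := by
  show ASym 3 1 2 = ga
  rw [ASym, if_neg (by norm_num)]
  show Agen 3 1 2 = ga
  rw [Agen, chain]
  norm_num [sig31, ga, pow_two]

theorem Acoe13 : (A 3 1 3).val = gp := by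
  show ASym 3 1 3 = gp
  rw [ASym, if_neg (by norm_num)]
  show Agen 3 1 3 = gp
  rw [Agen, chain]
  norm_num [List.range_succ, sig31, sig32, gp, pow_two]

theorem Acoe23 : (A 3 2 3).val = gb := by
  show ASym 3 2 3 = gb
  rw [ASym, if_neg (by norm_num)]
  show Agen 3 2 3 = gb
  rw [Agen, chain]
  norm_num [sig32, gb, pow_two]

-- the full twist in B_3 and its centrality
theorem zb_eq : ga * gp * gb = (s1 * s2 * s1) * (s1 * s2 * s1) := by
  calc ga * gp * gb = s1 * (s1 * s2 * s1) * s1 * s2 := by rw [ga, gp, gb]; group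
    _ = s1 * (s2 * s1 * s2) * s1 * s2 := by rw [brel]
    _ = (s1 * s2 * s1) * (s2 * s1 * s2) := by group
    _ = (s1 * s2 * s1) * (s1 * s2 * s1) := by rw [← brel]

theorem zb_central (g : BraidGroup 3) : (ga * gp * gb) * g = g * (ga * gp * gb) := by
  have hg : g ∈ Subgroup.centralizer {ga * gp * gb} := by
    have hmem : g ∈ Subgroup.closure (Set.range (PresentedGroup.of (rels := braidRels 3))) := by
      rw [PresentedGroup.closure_range_of]; trivial
    have hle : Subgroup.closure (Set.range (PresentedGroup.of (rels := braidRels 3))) ≤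
        Subgroup.centralizer {ga * gp * gb} := by
      rw [Subgroup.closure_le]
      rintro x ⟨j, rfl⟩
      simp only [SetLike.mem_coe]
      rw [Subgroup.mem_centralizer_iff]
      rintro h ⟨rfl⟩
      have hj : PresentedGroup.of (rels := braidRels 3) j = s1 ∨
          PresentedGroup.of (rels := braidRels 3) j = s2 := by
        fin_cases j
        · exact Or.inl rfl
        · exact Or.inr rfl
      rcases hj with rfl1 | rfl1 <;> rw [rfl1, zb_eq]
      · calc (s1 * s2 * s1) * (s1 * s2 * s1) * s1
            = (s1 * s2 * s1) * ((s1 * s2 * s1) * s1) := by group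
          _ = (s1 * s2 * s1) * (s2 * (s1 * s2 * s1)) := by rw [w_s1]
          _ = ((s1 * s2 * s1) * s2) * (s1 * s2 * s1) := by group
          _ = (s1 * (s1 * s2 * s1)) * (s1 * s2 * s1) := by rw [w_s2]
          _ = s1 * ((s1 * s2 * s1) * (s1 * s2 * s1)) := by group
      · calc (s1 * s2 * s1) * (s1 * s2 * s1) * s2
            = (s1 * s2 * s1) * ((s1 * s2 * s1) * s2) := by group
          _ = (s1 * s2 * s1) * (s1 * (s1 * s2 * s1)) := by rw [w_s2]
          _ = ((s1 * s2 * s1) * s1) * (s1 * s2 * s1) := by group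
          _ = (s2 * (s1 * s2 * s1)) * (s1 * s2 * s1) := by rw [w_s1]
          _ = s2 * ((s1 * s2 * s1) * (s1 * s2 * s1)) := by group
    exact hle hmem
  exact Subgroup.mem_centralizer_iff.1 hg (ga * gp * gb) rfl

-- names for the generators of P_3
def aa : P 3 := A 3 1 2
def pp : P 3 := A 3 1 3
def bb : P 3 := A 3 2 3
def cc : P 3 := bb⁻¹ * pp⁻¹
def zz : P 3 := aa * pp * bb

theorem z_central (x : P 3) : Commute zz x := by
  have hv : (zz : BraidGroup 3) = ga * gp * gb := by
    show (A 3 1 2).val * (A 3 1 3).val * (A 3 2 3).val = _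
    rw [Acoe12, Acoe13, Acoe23]
  have : (zz : BraidGroup 3) * (x : BraidGroup 3) = x * zz := by
    rw [hv]; exact zb_central x
  exact Subtype.ext this

theorem P3_gen (x : P 3) : x ∈ Subgroup.closure {aa, pp, bb} := by
  have hval : (x : BraidGroup 3) ∈ HH := pure_decomp x.2
  have himage : (PureBraid 3).subtype '' {aa, pp, bb} = {ga, gp, gb} := by
    rw [Set.image_insert_eq, Set.image_insert_eq, Set.image_singleton]
    have e1 : (PureBraid 3).subtype aa = ga := Acoe12
    have e2 : (PureBraid 3).subtype pp = gp := Acoe13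
    have e3 : (PureBraid 3).subtype bb = gb := Acoe23
    rw [e1, e2, e3]
  have himg : Subgroup.map (PureBraid 3).subtype (Subgroup.closure {aa, pp, bb}) = HH := by
    rw [MonoidHom.map_closure, himage]; rfl
  rw [← himg] at hval
  obtain ⟨y, hy, hxy⟩ := hval
  have : y = x := Subtype.ext hxy
  rwa [this] at hy

-- ## The exponent homomorphism on P 2
def two2 : BraidGroup 2 →* Multiplicative ℤ :=
  PresentedGroup.toGroup (f := fun _ => Multiplicative.ofAdd (1 : ℤ)) (by
    rintro r (⟨i, j, hij, rfl⟩ | ⟨i, j, hij, rfl⟩) <;>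
      exact absurd hij (by have := i.2; have := j.2; omega))

def expP2 : P 2 →* Multiplicative ℤ := two2.comp (PureBraid 2).subtype

theorem expP2_g : expP2 (A 2 1 2) = Multiplicative.ofAdd (2 : ℤ) := by
  have hval : (A 2 1 2).val = sig 2 1 ^ 2 := by
    show ASym 2 1 2 = _
    rw [ASym, if_neg (by norm_num)]
    show Agen 2 1 2 = _
    rw [Agen, chain]
    norm_num
  show two2 ((A 2 1 2).val) = _
  rw [hval, map_pow]
  have h1 : two2 (sig 2 1) = Multiplicative.ofAdd (1 : ℤ) := by
    rw [sig, dif_pos (by norm_num)]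
    exact PresentedGroup.toGroup.of _
  rw [h1]
  rfl

-- ## the commutator convention of the problem
def Kc {G : Type*} [Group G] (x y : G) : G := x⁻¹ * y⁻¹ * x * y

theorem map_Kc {G H : Type*} [Group G] [Group H] (f : G →* H) (x y : G) :
    f (Kc x y) = Kc (f x) (f y) := by simp [Kc]

theorem Kc_one_left {G : Type*} [Group G] (y : G) : Kc 1 y = 1 := by simp [Kc]

theorem Kc_one_right {G : Type*} [Group G] (x : G) : Kc x 1 = 1 := by simp [Kc]

theorem Kc_eq_one_iff {G : Type*} [Group G] {x y : G} : Kc x y = 1 ↔ Commute x y := by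
  rw [Kc, Commute, SemiconjBy]
  constructor
  · intro h
    have h2 := congrArg (fun t => y * x * t) h
    simpa [mul_assoc] using h2
  · intro h
    rw [mul_assoc, h]
    group

theorem map_Kc_comm {G H : Type*} [Group G] [CommGroup H] (f : G →* H) (x y : G) :
    f (Kc x y) = 1 := by
  rw [map_Kc, Kc_eq_one_iff]
  exact mul_comm _ _

-- ## Core abstract computation
section Core

variable {Q : Type*} [Group Q] (C B : Q)

theorem core_comm_GB
    (h2 : ∀ (i j k : ℤ) (s t : Q),
      Kc (s⁻¹ * Kc (C ^ i) ((C⁻¹ * B⁻¹) ^ j) * s) (t⁻¹ * B ^ k * t) = 1) :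
    Commute (Kc C B) B := by
  have key := h2 1 (-1) 1 (C⁻¹) 1
  rw [Kc_eq_one_iff] at key
  have e1 : C⁻¹⁻¹ * Kc (C ^ (1:ℤ)) ((C⁻¹ * B⁻¹) ^ (-1 : ℤ)) * C⁻¹ = Kc C B := by
    simp only [zpow_one, zpow_neg_one]
    rw [Kc, Kc]
    group
  rw [e1] at key
  simpa using key

theorem core_comm_GC
    (h1 : ∀ (i j k : ℤ) (s t : Q),
      Kc (s⁻¹ * Kc (C ^ i) (B ^ j) * s) (t⁻¹ * (C⁻¹ * B⁻¹) ^ k * t) = 1)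
    (h2 : ∀ (i j k : ℤ) (s t : Q),
      Kc (s⁻¹ * Kc (C ^ i) ((C⁻¹ * B⁻¹) ^ j) * s) (t⁻¹ * B ^ k * t) = 1) :
    Commute (Kc C B) C := by
  have hB : Commute (Kc C B) B := core_comm_GB C B h2
  have hP : Commute (Kc C B) (C⁻¹ * B⁻¹) := by
    have key := h1 1 1 1 1 1
    rw [Kc_eq_one_iff] at key
    simpa using key
  have hcomb : Commute (Kc C B) (B⁻¹ * (C⁻¹ * B⁻¹)⁻¹) := (hB.inv_right).mul_right hP.inv_right
  have e : B⁻¹ * (C⁻¹ * B⁻¹)⁻¹ = C := by group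
  rwa [e] at hcomb

theorem core_pow
    (hB : Commute (Kc C B) B) (hC : Commute (Kc C B) C) :
    ∀ n m : ℤ, Kc (C ^ n) (B ^ m) = (Kc C B) ^ (n * m) := by
  set Γ := Kc C B with hΓ
  have cfix : ∀ (x : Q), Commute Γ x → ∀ k : ℤ, x⁻¹ * Γ ^ k * x = Γ ^ k := by
    intro x h k
    rw [mul_assoc, (h.zpow_left k).eq, ← mul_assoc, inv_mul_cancel, one_mul]
  have cfix' : ∀ (x : Q), Commute Γ x → ∀ k : ℤ, x * Γ ^ k * x⁻¹ = Γ ^ k := by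
    intro x h k
    have h2 := cfix x⁻¹ h.inv_right k
    simpa using h2
  have huv : ∀ u v w : Q, Kc (u * v) w = v⁻¹ * Kc u w * v * Kc v w := by
    intro u v w; rw [Kc, Kc, Kc]; group
  have hvw : ∀ u v w : Q, Kc u (v * w) = Kc u w * (w⁻¹ * Kc u v * w) := by
    intro u v w; rw [Kc, Kc, Kc]; group
  have kinvL : ∀ u v : Q, Kc u⁻¹ v = u * (Kc u v)⁻¹ * u⁻¹ := by
    intro u v; rw [Kc, Kc]; group
  have kinvR : ∀ u v : Q, Kc u v⁻¹ = v * (Kc u v)⁻¹ * v⁻¹ := by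
    intro u v; rw [Kc, Kc]; group
  have step1 : ∀ n : ℤ, Kc (C ^ n) B = Γ ^ n := by
    intro n
    induction n using Int.induction_on with
    | zero => simpa using Kc_one_left B
    | succ n ih =>
      rw [zpow_add_one, huv, ih, cfix C hC (n : ℤ), ← hΓ]
      rw [zpow_add_one]
    | pred n ih =>
      rw [zpow_sub_one, huv, ih, inv_inv, cfix' C hC (-(n : ℤ)), kinvL, ← hΓ]
      rw [show C * Γ⁻¹ * C⁻¹ = Γ⁻¹ by simpa using cfix' C hC (-1)]
      rw [zpow_sub_one]
  intro n m
  induction m using Int.induction_on with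
  | zero => simpa using Kc_one_right (C ^ n)
  | succ m ih =>
    rw [zpow_add_one, hvw, ih, step1, cfix B hB (n * m)]
    rw [← zpow_add]
    congr 1
    ring
  | pred m ih =>
    rw [zpow_sub_one, hvw, ih, kinvR, step1, inv_inv, cfix' B hB (n * -(m : ℤ))]
    rw [show B * (Γ ^ n)⁻¹ * B⁻¹ = (Γ ^ n)⁻¹ by
      simpa [zpow_neg] using cfix' B hB (-n)]
    rw [← zpow_neg, ← zpow_add]
    congr 1
    ring

end Core

-- ## The 4-strand side
section FourStrand

variable (D : ℕ → (P 4 →* P 3)) (hD : ∀ k, 1 ≤ k → k ≤ 4 → IsStrandRemoval 4 k (D k))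
variable (Θ : MulAut (P 4)) (hΘ : IsTheta 4 Θ)

def XX : P 4 := A 4 1 4
def YY : P 4 := A 4 2 4
def ZZ : P 4 := A 4 3 4

theorem Brun4_iff (w : P 4) :
    w ∈ Brunnian 4 D ↔ ∀ k, 1 ≤ k → k ≤ 4 → D k w = 1 := by
  simp only [Brunnian, Subgroup.mem_iInf, MonoidHom.mem_ker, Finset.mem_Icc, and_imp]

theorem Brun4_normal : (Brunnian 4 D).Normal := by
  constructor
  intro n hn g
  rw [Brun4_iff] at hn ⊢
  intro k h1 h4
  simp [map_mul, hn k h1 h4]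

section Dvals
variable {D} (hD' : ∀ k, 1 ≤ k → k ≤ 4 → IsStrandRemoval 4 k (D k))
include hD'

theorem D1X : D 1 (XX) = 1 := by
  have h := hD' 1 (by norm_num) (by norm_num) 1 4 (by norm_num) (by norm_num) (by norm_num)
  simpa [XX] using h

theorem D1Y : D 1 (YY) = pp := by
  have h := hD' 1 (by norm_num) (by norm_num) 2 4 (by norm_num) (by norm_num) (by norm_num)
  simpa [phi, pp, YY] using h

theorem D1Z : D 1 (ZZ) = bb := by
  have h := hD' 1 (by norm_num) (by norm_num) 3 4 (by norm_num) (by norm_num) (by norm_num)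
  simpa [phi, bb, ZZ] using h

theorem D2X : D 2 (XX) = pp := by
  have h := hD' 2 (by norm_num) (by norm_num) 1 4 (by norm_num) (by norm_num) (by norm_num)
  simpa [phi, pp, XX] using h

theorem D2Y : D 2 (YY) = 1 := by
  have h := hD' 2 (by norm_num) (by norm_num) 2 4 (by norm_num) (by norm_num) (by norm_num)
  simpa [YY] using h

theorem D2Z : D 2 (ZZ) = bb := by
  have h := hD' 2 (by norm_num) (by norm_num) 3 4 (by norm_num) (by norm_num) (by norm_num)
  simpa [phi, bb, ZZ] using h

theorem D3X : D 3 (XX) = pp := by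
  have h := hD' 3 (by norm_num) (by norm_num) 1 4 (by norm_num) (by norm_num) (by norm_num)
  simpa [phi, pp, XX] using h

theorem D3Y : D 3 (YY) = bb := by
  have h := hD' 3 (by norm_num) (by norm_num) 2 4 (by norm_num) (by norm_num) (by norm_num)
  simpa [phi, bb, YY] using h

theorem D3Z : D 3 (ZZ) = 1 := by
  have h := hD' 3 (by norm_num) (by norm_num) 3 4 (by norm_num) (by norm_num) (by norm_num)
  simpa [ZZ] using h

theorem D4X : D 4 (XX) = 1 := by
  have h := hD' 4 (by norm_num) (by norm_num) 1 4 (by norm_num) (by norm_num) (by norm_num)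
  simpa [XX] using h

theorem D4Y : D 4 (YY) = 1 := by
  have h := hD' 4 (by norm_num) (by norm_num) 2 4 (by norm_num) (by norm_num) (by norm_num)
  simpa [YY] using h

theorem D4Z : D 4 (ZZ) = 1 := by
  have h := hD' 4 (by norm_num) (by norm_num) 3 4 (by norm_num) (by norm_num) (by norm_num)
  simpa [ZZ] using h

theorem D1A23 : D 1 (A 4 2 3) = aa := by
  have h := hD' 1 (by norm_num) (by norm_num) 2 3 (by norm_num) (by norm_num) (by norm_num)
  simpa [phi, aa] using h

end Dvals

theorem A444 : A 4 4 4 = (1 : P 4) := by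
  apply Subtype.ext
  show ASym 4 4 4 = 1
  rw [ASym, if_pos rfl]

theorem A044 : A₀ 4 4 = (XX * YY * ZZ)⁻¹ := by
  apply Subtype.ext
  have h44 : ASym 4 4 4 = 1 := by rw [ASym, if_pos rfl]
  show (((List.range 4).map (fun t => ASym 4 (t + 1) 4)).prod)⁻¹ = _
  rw [show List.range 4 = [0, 1, 2, 3] from rfl]
  simp only [List.map_cons, List.map_nil, List.prod_cons, List.prod_nil]
  norm_num [h44]
  rfl

section Tvals
variable {Θ} (hΘ' : IsTheta 4 Θ)
include hΘ'

theorem TX : Θ (XX) = XX⁻¹ * (XX * YY * ZZ)⁻¹ * XX := by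
  have h := hΘ'.2 4 (by norm_num) (by norm_num)
  rw [A044] at h
  exact h

theorem TY : Θ (YY) = YY := hΘ'.1 2 4 (by norm_num) (by norm_num) (by norm_num)

theorem TZ : Θ (ZZ) = ZZ := hΘ'.1 3 4 (by norm_num) (by norm_num) (by norm_num)

end Tvals

section Dels
variable {D Θ} (hD' : ∀ k, 1 ≤ k → k ≤ 4 → IsStrandRemoval 4 k (D k)) (hΘ' : IsTheta 4 Θ)
include hD' hΘ'

theorem ddX : del 4 D Θ (XX) = cc := by
  show D 1 (Θ (XX)) = cc
  rw [TX hΘ']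
  simp [map_mul, map_inv, D1X hD', D1Y hD', D1Z hD', mul_inv_rev, cc]

theorem ddY : del 4 D Θ (YY) = pp := by
  show D 1 (Θ (YY)) = pp
  rw [TY hΘ', D1Y hD']

theorem ddZ : del 4 D Θ (ZZ) = bb := by
  show D 1 (Θ (ZZ)) = bb
  rw [TZ hΘ', D1Z hD']

theorem del_surj : Function.Surjective (del 4 D Θ) := by
  intro x
  have hx := P3_gen x
  have hle : Subgroup.closure {aa, pp, bb} ≤ (del 4 D Θ).range := by
    rw [Subgroup.closure_le]
    rintro y (rfl | rfl | rfl) <;> simp only [SetLike.mem_coe, MonoidHom.mem_range]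
    · refine ⟨Θ.symm (A 4 2 3), ?_⟩
      show D 1 (Θ (Θ.symm _)) = _
      rw [MulEquiv.apply_symm_apply]
      exact D1A23 hD'
    · refine ⟨Θ.symm (YY), ?_⟩
      show D 1 (Θ (Θ.symm _)) = _
      rw [MulEquiv.apply_symm_apply]
      exact D1Y hD'
    · refine ⟨Θ.symm (ZZ), ?_⟩
      show D 1 (Θ (Θ.symm _)) = _
      rw [MulEquiv.apply_symm_apply]
      exact D1Z hD'
  have hmem := hle hx
  rwa [MonoidHom.mem_range] at hmem

theorem fam1_mem (i j k : ℤ) (s' t' : P 3) :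
    Kc (s'⁻¹ * Kc (cc ^ i) (bb ^ j) * s') (t'⁻¹ * pp ^ k * t') ∈ Bd 3 D Θ := by
  obtain ⟨s, hs⟩ := del_surj hD' hΘ' s'
  obtain ⟨t, ht⟩ := del_surj hD' hΘ' t'
  have hw : Kc (s⁻¹ * Kc (XX ^ i) (ZZ ^ j) * s) (t⁻¹ * YY ^ k * t) ∈ Brunnian 4 D := by
    rw [Brun4_iff]
    intro κ h1 h4
    interval_cases κ
    · simp only [Kc, map_mul, map_inv, map_zpow, D1X hD', D1Y hD', D1Z hD', one_zpow]
      group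
    · simp only [Kc, map_mul, map_inv, map_zpow, D2X hD', D2Y hD', D2Z hD', one_zpow]
      group
    · simp only [Kc, map_mul, map_inv, map_zpow, D3X hD', D3Y hD', D3Z hD', one_zpow]
      group
    · simp only [Kc, map_mul, map_inv, map_zpow, D4X hD', D4Y hD', D4Z hD', one_zpow]
      group
  rw [Bd, Subgroup.mem_map]
  refine ⟨_, hw, ?_⟩
  simp only [Kc, map_mul, map_inv, map_zpow, ddX hD' hΘ', ddY hD' hΘ', ddZ hD' hΘ', hs, ht]

theorem fam2_mem (i j k : ℤ) (s' t' : P 3) :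
    Kc (s'⁻¹ * Kc (cc ^ i) (pp ^ j) * s') (t'⁻¹ * bb ^ k * t') ∈ Bd 3 D Θ := by
  obtain ⟨s, hs⟩ := del_surj hD' hΘ' s'
  obtain ⟨t, ht⟩ := del_surj hD' hΘ' t'
  have hw : Kc (s⁻¹ * Kc (XX ^ i) (YY ^ j) * s) (t⁻¹ * ZZ ^ k * t) ∈ Brunnian 4 D := by
    rw [Brun4_iff]
    intro κ h1 h4
    interval_cases κ
    · simp only [Kc, map_mul, map_inv, map_zpow, D1X hD', D1Y hD', D1Z hD', one_zpow]
      group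
    · simp only [Kc, map_mul, map_inv, map_zpow, D2X hD', D2Y hD', D2Z hD', one_zpow]
      group
    · simp only [Kc, map_mul, map_inv, map_zpow, D3X hD', D3Y hD', D3Z hD', one_zpow]
      group
    · simp only [Kc, map_mul, map_inv, map_zpow, D4X hD', D4Y hD', D4Z hD', one_zpow]
      group
  rw [Bd, Subgroup.mem_map]
  refine ⟨_, hw, ?_⟩
  simp only [Kc, map_mul, map_inv, map_zpow, ddX hD' hΘ', ddY hD' hΘ', ddZ hD' hΘ', hs, ht]

end Dels

end FourStrand

-- ## more core computations
section Core2

variable {Q : Type*} [Group Q]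

theorem Kc_def {x y : Q} : Kc x y = x⁻¹ * y⁻¹ * x * y := rfl

theorem Kc_mul_left_central {z u v : Q} (h : Commute z v) : Kc (z * u) v = Kc u v := by
  have e : z⁻¹ * v⁻¹ * z = v⁻¹ := by
    calc z⁻¹ * v⁻¹ * z = z⁻¹ * (v⁻¹ * (z * v)) * v⁻¹ := by group
      _ = z⁻¹ * (v⁻¹ * (v * z)) * v⁻¹ := by rw [h.eq]
      _ = v⁻¹ := by group
  calc Kc (z * u) v = u⁻¹ * (z⁻¹ * v⁻¹ * z) * u * v := by rw [Kc_def]; group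
    _ = u⁻¹ * v⁻¹ * u * v := by rw [e]
    _ = Kc u v := by rw [Kc_def]

variable (C B Z : Q)

theorem core_swap (hB : Commute (Kc C B) B) (hC : Commute (Kc C B) C) (α β : ℤ) :
    B ^ β * C ^ α = C ^ α * B ^ β * (Kc C B) ^ (-(α * β)) := by
  have hk := core_pow C B hB hC α β
  have e2 : C ^ α * B ^ β = B ^ β * C ^ α * (Kc C B) ^ (α * β) := by
    calc C ^ α * B ^ β = B ^ β * C ^ α * Kc (C ^ α) (B ^ β) := by rw [Kc_def]; group
      _ = B ^ β * C ^ α * (Kc C B) ^ (α * β) := by rw [hk]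
  rw [e2, mul_assoc, ← zpow_add]
  simp

theorem core_mulform (hB : Commute (Kc C B) B) (hC : Commute (Kc C B) C)
    (hZC : Commute Z C) (hZB : Commute Z B)
    (α β k γ α' β' k' γ' : ℤ) :
    (C ^ α * B ^ β * (Kc C B) ^ k * Z ^ γ) * (C ^ α' * B ^ β' * (Kc C B) ^ k' * Z ^ γ') =
      C ^ (α + α') * B ^ (β + β') * (Kc C B) ^ (k + k' - α' * β) * Z ^ (γ + γ') := by
  have hZG : Commute Z (Kc C B) := by
    rw [Kc_def]
    exact ((hZC.inv_right.mul_right hZB.inv_right).mul_right hZC).mul_right hZB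
  have hGB := hB
  have hGC := hC
  calc (C ^ α * B ^ β * (Kc C B) ^ k * Z ^ γ) * (C ^ α' * B ^ β' * (Kc C B) ^ k' * Z ^ γ')
      = C ^ α * B ^ β * ((Kc C B) ^ k * (Z ^ γ * C ^ α')) * B ^ β' * (Kc C B) ^ k' * Z ^ γ' := by
        group
    _ = C ^ α * B ^ β * ((Kc C B) ^ k * (C ^ α' * Z ^ γ)) * B ^ β' * (Kc C B) ^ k' * Z ^ γ' := by
        rw [(hZC.zpow_zpow γ α').eq]
    _ = C ^ α * B ^ β * ((Kc C B) ^ k * C ^ α') * (Z ^ γ * B ^ β') * (Kc C B) ^ k' * Z ^ γ' := by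
        group
    _ = C ^ α * B ^ β * (C ^ α' * (Kc C B) ^ k) * (B ^ β' * Z ^ γ) * (Kc C B) ^ k' * Z ^ γ' := by
        rw [(hGC.zpow_zpow k α').eq, (hZB.zpow_zpow γ β').eq]
    _ = C ^ α * (B ^ β * C ^ α') * ((Kc C B) ^ k * B ^ β') * (Z ^ γ * (Kc C B) ^ k') * Z ^ γ' := by
        group
    _ = C ^ α * (B ^ β * C ^ α') * (B ^ β' * (Kc C B) ^ k) * ((Kc C B) ^ k' * Z ^ γ) * Z ^ γ' := by
        rw [(hGB.zpow_zpow k β').eq, (hZG.zpow_zpow γ k').eq]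
    _ = C ^ α * (C ^ α' * B ^ β * (Kc C B) ^ (-(α' * β))) * (B ^ β' * (Kc C B) ^ k) *
          ((Kc C B) ^ k' * Z ^ γ) * Z ^ γ' := by
        rw [core_swap C B hB hC α' β]
    _ = C ^ α * C ^ α' * B ^ β * ((Kc C B) ^ (-(α' * β)) * B ^ β') * (Kc C B) ^ k *
          (Kc C B) ^ k' * Z ^ γ * Z ^ γ' := by
        group
    _ = C ^ α * C ^ α' * B ^ β * (B ^ β' * (Kc C B) ^ (-(α' * β))) * (Kc C B) ^ k *
          (Kc C B) ^ k' * Z ^ γ * Z ^ γ' := by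
        rw [(hGB.zpow_zpow (-(α' * β)) β').eq]
    _ = C ^ (α + α') * B ^ (β + β') * (Kc C B) ^ (k + k' - α' * β) * Z ^ (γ + γ') := by
        rw [zpow_add, zpow_add, zpow_add, show k + k' - α' * β = -(α' * β) + k + k' by ring,
          zpow_add, zpow_add]
        group

theorem core_invform (hB : Commute (Kc C B) B) (hC : Commute (Kc C B) C)
    (hZC : Commute Z C) (hZB : Commute Z B) (α β k γ : ℤ) :
    (C ^ α * B ^ β * (Kc C B) ^ k * Z ^ γ)⁻¹ =
      C ^ (-α) * B ^ (-β) * (Kc C B) ^ (-k - α * β) * Z ^ (-γ) := by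
  apply inv_eq_of_mul_eq_one_right
  rw [core_mulform C B Z hB hC hZC hZB α β k γ (-α) (-β) (-k - α * β) (-γ)]
  rw [show α + -α = 0 by ring, show β + -β = 0 by ring, show γ + -γ = 0 by ring,
    show k + (-k - α * β) - -α * β = 0 by ring]
  simp

end Core2

-- ## The subgroup NN and the quotient computation
theorem cc_def : cc = bb⁻¹ * pp⁻¹ := rfl
theorem zz_def : zz = aa * pp * bb := rfl

theorem pcb : cc⁻¹ * bb⁻¹ = pp := by rw [cc_def]; group
theorem haz : aa = zz * cc := by rw [zz_def, cc_def]; group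
theorem kaz : Kc aa bb = Kc cc bb := by
  rw [haz]
  exact Kc_mul_left_central (z_central bb)

def famSet : Set (P 3) :=
  {x | (∃ i j k : ℤ, ∃ s t : P 3,
      x = Kc (s⁻¹ * Kc (cc ^ i) (bb ^ j) * s) (t⁻¹ * pp ^ k * t)) ∨
    (∃ i j k : ℤ, ∃ s t : P 3,
      x = Kc (s⁻¹ * Kc (cc ^ i) (pp ^ j) * s) (t⁻¹ * bb ^ k * t))}

def NN : Subgroup (P 3) := Subgroup.normalClosure famSet

instance NN_normal : NN.Normal := Subgroup.normalClosure_normal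

def mkN : P 3 →* P 3 ⧸ NN := QuotientGroup.mk' NN

theorem mkN_surj : Function.Surjective mkN := QuotientGroup.mk'_surjective NN

theorem mkN_eq_one {x : P 3} (h : x ∈ NN) : mkN x = 1 := by
  show QuotientGroup.mk' NN x = 1
  rwa [QuotientGroup.mk'_apply, QuotientGroup.eq_one_iff]

theorem NN_le_ker (f : P 3 →* Multiplicative ℤ) : NN ≤ f.ker := by
  apply Subgroup.normalClosure_le_normal
  rintro x (⟨i, j, k, s, t, rfl⟩ | ⟨i, j, k, s, t, rfl⟩) <;>
    exact map_Kc_comm f _ _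

theorem NN_le_Bd (D : ℕ → (P 4 →* P 3)) (hD : ∀ k, 1 ≤ k → k ≤ 4 → IsStrandRemoval 4 k (D k))
    (Θ : MulAut (P 4)) (hΘ : IsTheta 4 Θ) : NN ≤ Bd 3 D Θ := by
  haveI hBrunN : (Brunnian 4 D).Normal := Brun4_normal D
  haveI hBdN : (Bd 3 D Θ).Normal := Subgroup.Normal.map hBrunN _ (del_surj hD hΘ)
  apply Subgroup.normalClosure_le_normal
  rintro x (⟨i, j, k, s, t, rfl⟩ | ⟨i, j, k, s, t, rfl⟩)
  · exact fam1_mem hD hΘ i j k s t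
  · exact fam2_mem hD hΘ i j k s t

theorem Qh1 : ∀ (i j k : ℤ) (s t : P 3 ⧸ NN),
    Kc (s⁻¹ * Kc ((mkN cc) ^ i) ((mkN bb) ^ j) * s)
      (t⁻¹ * ((mkN cc)⁻¹ * (mkN bb)⁻¹) ^ k * t) = 1 := by
  intro i j k s t
  obtain ⟨s0, rfl⟩ := mkN_surj s
  obtain ⟨t0, rfl⟩ := mkN_surj t
  have hP : (mkN cc)⁻¹ * (mkN bb)⁻¹ = mkN pp := by
    rw [← map_inv, ← map_inv, ← map_mul, pcb]
  rw [hP]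
  have he : mkN (Kc (s0⁻¹ * Kc (cc ^ i) (bb ^ j) * s0) (t0⁻¹ * pp ^ k * t0)) =
      Kc ((mkN s0)⁻¹ * Kc ((mkN cc) ^ i) ((mkN bb) ^ j) * mkN s0)
        ((mkN t0)⁻¹ * (mkN pp) ^ k * mkN t0) := by
    simp only [map_Kc, map_mul, map_inv, map_zpow]
  rw [← he]
  exact mkN_eq_one (Subgroup.subset_normalClosure (Or.inl ⟨i, j, k, s0, t0, rfl⟩))

theorem Qh2 : ∀ (i j k : ℤ) (s t : P 3 ⧸ NN),
    Kc (s⁻¹ * Kc ((mkN cc) ^ i) (((mkN cc)⁻¹ * (mkN bb)⁻¹) ^ j) * s)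
      (t⁻¹ * (mkN bb) ^ k * t) = 1 := by
  intro i j k s t
  obtain ⟨s0, rfl⟩ := mkN_surj s
  obtain ⟨t0, rfl⟩ := mkN_surj t
  have hP : (mkN cc)⁻¹ * (mkN bb)⁻¹ = mkN pp := by
    rw [← map_inv, ← map_inv, ← map_mul, pcb]
  rw [hP]
  have he : mkN (Kc (s0⁻¹ * Kc (cc ^ i) (pp ^ j) * s0) (t0⁻¹ * bb ^ k * t0)) =
      Kc ((mkN s0)⁻¹ * Kc ((mkN cc) ^ i) ((mkN pp) ^ j) * mkN s0)
        ((mkN t0)⁻¹ * (mkN bb) ^ k * mkN t0) := by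
    simp only [map_Kc, map_mul, map_inv, map_zpow]
  rw [← he]
  exact mkN_eq_one (Subgroup.subset_normalClosure (Or.inr ⟨i, j, k, s0, t0, rfl⟩))

theorem commGB : Commute (Kc (mkN cc) (mkN bb)) (mkN bb) := core_comm_GB _ _ Qh2
theorem commGC : Commute (Kc (mkN cc) (mkN bb)) (mkN cc) := core_comm_GC _ _ Qh1 Qh2
theorem commZC : Commute (mkN zz) (mkN cc) := (z_central cc).map mkN
theorem commZB : Commute (mkN zz) (mkN bb) := (z_central bb).map mkN

theorem decompQ (x : P 3) : ∃ α β k γ : ℤ,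
    mkN x = (mkN cc) ^ α * (mkN bb) ^ β * (Kc (mkN cc) (mkN bb)) ^ k * (mkN zz) ^ γ := by
  induction P3_gen x using Subgroup.closure_induction with
  | mem y hy =>
    rcases hy with rfl | rfl | rfl
    · refine ⟨1, 0, 0, 1, ?_⟩
      rw [show mkN aa = mkN zz * mkN cc by rw [← map_mul, ← haz], commZC.eq]
      simp
    · refine ⟨-1, -1, 0, 0, ?_⟩
      rw [show mkN pp = (mkN cc)⁻¹ * (mkN bb)⁻¹ by rw [← map_inv, ← map_inv, ← map_mul, pcb]]
      simp [zpow_neg_one]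
    · exact ⟨0, 1, 0, 0, by simp⟩
  | one => exact ⟨0, 0, 0, 0, by simp⟩
  | mul u v hu hv ihu ihv =>
    obtain ⟨α, β, k, γ, h1⟩ := ihu
    obtain ⟨α', β', k', γ', h2⟩ := ihv
    refine ⟨α + α', β + β', k + k' - α' * β, γ + γ', ?_⟩
    rw [map_mul, h1, h2, core_mulform _ _ _ commGB commGC commZC commZB]
  | inv u hu ihu =>
    obtain ⟨α, β, k, γ, h1⟩ := ihu
    refine ⟨-α, -β, -k - α * β, -γ, ?_⟩
    rw [map_inv, h1, core_invform _ _ _ commGB commGC commZC commZB]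

theorem part1Q (n m : ℤ) : mkN (Kc (aa ^ n) (bb ^ m) * (Kc aa bb) ^ (-(n * m))) = 1 := by
  have hZnB : Commute ((mkN zz) ^ n) ((mkN bb) ^ m) := commZB.zpow_zpow n m
  have e1 : mkN (Kc (aa ^ n) (bb ^ m)) = (Kc (mkN cc) (mkN bb)) ^ (n * m) := by
    rw [map_Kc, map_zpow, map_zpow]
    rw [show mkN aa = mkN zz * mkN cc by rw [← map_mul, ← haz]]
    rw [commZC.mul_zpow]
    rw [Kc_mul_left_central hZnB]
    exact core_pow _ _ commGB commGC n m
  have e2 : mkN ((Kc aa bb) ^ (-(n * m))) = (Kc (mkN cc) (mkN bb)) ^ (-(n * m)) := by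
    rw [map_zpow, kaz, map_Kc]
  rw [map_mul, e1, e2, ← zpow_add]
  simp

theorem mkN_eq_one_iff {x : P 3} : mkN x = 1 ↔ x ∈ NN := by
  show QuotientGroup.mk' NN x = 1 ↔ _
  rw [QuotientGroup.mk'_apply, QuotientGroup.eq_one_iff]

theorem mkN_eq {x y : P 3} (h : mkN x = mkN y) : x⁻¹ * y ∈ NN := by
  have h' : (x : P 3 ⧸ NN) = (y : P 3 ⧸ NN) := by
    rwa [mkN, QuotientGroup.mk'_apply, QuotientGroup.mk'_apply] at h
  rwa [QuotientGroup.eq] at h'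

theorem Brun_iff (n : ℕ) (d : ℕ → (P n →* P (n - 1))) (w : P n) :
    w ∈ Brunnian n d ↔ ∀ k, 1 ≤ k → k ≤ n → d k w = 1 := by
  simp only [Brunnian, Subgroup.mem_iInf, MonoidHom.mem_ker, Finset.mem_Icc, and_imp]

/-- With `a = A_{1,2}` and `b = A_{2,3}` in `P 3`: for all nonzero integers `n, m`, the element
`[aⁿ, bᵐ] ⬝ [a,b]^{-nm}` lies in `Bd_3`; consequently the coset of `[a,b]` generates
`Z_3 / Bd_3` (here `[x,y] = x⁻¹y⁻¹xy`). -/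
theorem commutator_powers_mod_Bd3
    (d : ℕ → (P 3 →* P 2))
    (hd : ∀ k, 1 ≤ k → k ≤ 3 → IsStrandRemoval 3 k (d k))
    (θ : MulAut (P 3)) (hθ : IsTheta 3 θ)
    (D : ℕ → (P 4 →* P 3))
    (hD : ∀ k, 1 ≤ k → k ≤ 4 → IsStrandRemoval 4 k (D k))
    (Θ : MulAut (P 4)) (hΘ : IsTheta 4 Θ) :
    (∀ m₁ m₂ : ℤ, m₁ ≠ 0 → m₂ ≠ 0 →
      ((A 3 1 2 ^ m₁)⁻¹ * (A 3 2 3 ^ m₂)⁻¹ * A 3 1 2 ^ m₁ * A 3 2 3 ^ m₂) *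
          ((A 3 1 2)⁻¹ * (A 3 2 3)⁻¹ * A 3 1 2 * A 3 2 3) ^ (-(m₁ * m₂)) ∈ Bd 3 D Θ) ∧
      ∀ x ∈ Zgrp 3 d θ, ∃ k : ℤ,
        x * (((A 3 1 2)⁻¹ * (A 3 2 3)⁻¹ * A 3 1 2 * A 3 2 3) ^ k)⁻¹ ∈ Bd 3 D Θ := by
  constructor
  · -- part 1
    intro m₁ m₂ _ _
    show Kc (aa ^ m₁) (bb ^ m₂) * (Kc aa bb) ^ (-(m₁ * m₂)) ∈ Bd 3 D Θ
    exact NN_le_Bd D hD Θ hΘ (mkN_eq_one_iff.mp (part1Q m₁ m₂))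
  · -- part 2
    intro x hx
    have hxB : x ∈ Brunnian 3 d := (Subgroup.mem_inf.mp hx).1
    have hdx : ∀ κ, 1 ≤ κ → κ ≤ 3 → d κ x = 1 := (Brun_iff 3 d x).mp hxB
    -- values of the strand-removal maps on the generators
    have d1aa : d 1 aa = 1 := by
      have h := hd 1 (by norm_num) (by norm_num) 1 2 (by norm_num) (by norm_num) (by norm_num)
      simpa [aa] using h
    have d1pp : d 1 pp = 1 := by
      have h := hd 1 (by norm_num) (by norm_num) 1 3 (by norm_num) (by norm_num) (by norm_num)
      simpa [pp] using h
    have d1bb : d 1 bb = A 2 1 2 := by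
      have h := hd 1 (by norm_num) (by norm_num) 2 3 (by norm_num) (by norm_num) (by norm_num)
      simpa [bb, phi] using h
    have d2aa : d 2 aa = 1 := by
      have h := hd 2 (by norm_num) (by norm_num) 1 2 (by norm_num) (by norm_num) (by norm_num)
      simpa [aa] using h
    have d2pp : d 2 pp = A 2 1 2 := by
      have h := hd 2 (by norm_num) (by norm_num) 1 3 (by norm_num) (by norm_num) (by norm_num)
      simpa [pp, phi] using h
    have d2bb : d 2 bb = 1 := by
      have h := hd 2 (by norm_num) (by norm_num) 2 3 (by norm_num) (by norm_num) (by norm_num)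
      simpa [bb] using h
    have d3aa : d 3 aa = A 2 1 2 := by
      have h := hd 3 (by norm_num) (by norm_num) 1 2 (by norm_num) (by norm_num) (by norm_num)
      simpa [aa, phi] using h
    have d3pp : d 3 pp = 1 := by
      have h := hd 3 (by norm_num) (by norm_num) 1 3 (by norm_num) (by norm_num) (by norm_num)
      simpa [pp] using h
    have d3bb : d 3 bb = 1 := by
      have h := hd 3 (by norm_num) (by norm_num) 2 3 (by norm_num) (by norm_num) (by norm_num)
      simpa [bb] using h
    -- decomposition in the quotient
    obtain ⟨α, β, k, γ, hdec⟩ := decompQ x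
    have hword : mkN (cc ^ α * bb ^ β * (Kc cc bb) ^ k * zz ^ γ) =
        (mkN cc) ^ α * (mkN bb) ^ β * (Kc (mkN cc) (mkN bb)) ^ k * (mkN zz) ^ γ := by
      simp only [map_mul, map_zpow, map_Kc]
    have hrel : x⁻¹ * (cc ^ α * bb ^ β * (Kc cc bb) ^ k * zz ^ γ) ∈ NN :=
      mkN_eq (by rw [hdec, hword])
    -- exponent extraction
    have hzero : α = 0 ∧ β = 0 ∧ γ = 0 := by
      have key : ∀ κ, 1 ≤ κ → κ ≤ 3 →
          expP2 (d κ cc) ^ α * expP2 (d κ bb) ^ β * expP2 (d κ zz) ^ γ = 1 := by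
        intro κ h1 h3
        have hker := NN_le_ker (expP2.comp (d κ)) hrel
        rw [MonoidHom.mem_ker] at hker
        have hx0 : (expP2.comp (d κ)) x = 1 := by
          simp [MonoidHom.comp_apply, hdx κ h1 h3]
        rw [map_mul, map_inv, hx0, inv_one, one_mul] at hker
        rw [map_mul, map_mul, map_mul, map_zpow, map_zpow, map_zpow,
          map_Kc_comm (expP2.comp (d κ)), one_zpow, mul_one] at hker
        simpa [MonoidHom.comp_apply] using hker
      have e1 := key 1 (by norm_num) (by norm_num)
      have e2 := key 2 (by norm_num) (by norm_num)
      have e3 := key 3 (by norm_num) (by norm_num)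
      rw [cc_def, zz_def] at e1 e2 e3
      simp only [map_mul, map_inv] at e1 e2 e3
      rw [d1aa, d1pp, d1bb] at e1
      rw [d2aa, d2pp, d2bb] at e2
      rw [d3aa, d3pp, d3bb] at e3
      rw [expP2_g] at e1 e2 e3
      simp only [map_one, inv_one, mul_one, one_mul, one_zpow] at e1 e2 e3
      have t1 := congrArg Multiplicative.toAdd e1
      have t2 := congrArg Multiplicative.toAdd e2
      have t3 := congrArg Multiplicative.toAdd e3
      simp only [toAdd_mul, toAdd_zpow, toAdd_inv, toAdd_ofAdd, toAdd_one, smul_eq_mul] at t1 t2 t3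
      refine ⟨by omega, by omega, by omega⟩
    obtain ⟨rfl, rfl, rfl⟩ := hzero
    refine ⟨k, ?_⟩
    show x * ((Kc aa bb) ^ k)⁻¹ ∈ Bd 3 D Θ
    have hxk : mkN x = mkN ((Kc aa bb) ^ k) := by
      rw [hdec, map_zpow, kaz, map_Kc]
      simp
    have hrel2 : x⁻¹ * (Kc aa bb) ^ k ∈ NN := mkN_eq hxk
    have hshape : x * ((Kc aa bb) ^ k)⁻¹ = x * (x⁻¹ * (Kc aa bb) ^ k)⁻¹ * x⁻¹ := by group
    rw [hshape]
    exact NN_le_Bd D hD Θ hΘ (NN_normal.conj_mem _ (inv_mem hrel2) x)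

end Braids
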